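/- Let k ≥ 1 and 0 < R₀ < R₁, and let H(p,q) := (|p|² − |q|²)/2 on ℝ^{2k}. For any u ∈ ℝ^k with |u| = √R₀, the curve γ(t) := (e^t·u/√2, e^t·u/√2) is a solution of Hamilton's equations of H defined for all t ∈ ℝ; moreover γ(0) belongs to the floor 𝓕 and γ(t*) belongs to the ceiling 𝓒 for t* := (1/2)·log(R₁/R₀) > 0. Consequently, the quadratic Hamiltonian H admits a Hamiltonian chord from 𝓕 to 𝓒 of time-length (1/2)·log(R₁/R₀). -/

import Mathlib

open Real Set

noncomputable section

/-- `ℝ^k` as a function type; the Euclidean norm is `eucNorm`. -/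
abbrev Vec (k : ℕ) := Fin k → ℝ

/-- The phase space `ℝ^{2k} = ℝ^k(p) × ℝ^k(q)`. -/
abbrev Phase (k : ℕ) := Vec k × Vec k

/-- Euclidean norm on `ℝ^k`. -/
def eucNorm {k : ℕ} (x : Vec k) : ℝ := Real.sqrt (∑ i, x i ^ 2)

/-- The vector of partial derivatives of `f` at `x` (the gradient w.r.t. the Euclidean
structure). -/
def gradVec {k : ℕ} (f : Vec k → ℝ) (x : Vec k) : Vec k :=
  fun i => fderiv ℝ f x (Pi.single i 1)

/-- `γ` solves Hamilton's equations `p' = -∂G/∂q`, `q' = ∂G/∂p` of the time-dependent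
Hamiltonian `G` at every time `t ∈ S`. -/
def IsHamSolOn {k : ℕ} (G : Phase k × ℝ → ℝ) (γ : ℝ → Phase k) (S : Set ℝ) : Prop :=
  ∀ t ∈ S,
    HasDerivAt (fun s => (γ s).1) (-(gradVec (fun q => G (((γ t).1, q), t)) (γ t).2)) t ∧
    HasDerivAt (fun s => (γ s).2) (gradVec (fun p => G ((p, (γ t).2), t)) (γ t).1) t

/-- `G` is complete: through every initial condition there is a solution of Hamilton's
equations defined on all of `ℝ`. -/
def HamComplete {k : ℕ} (G : Phase k × ℝ → ℝ) : Prop :=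
  ∀ (t₀ : ℝ) (x₀ : Phase k), ∃ γ : ℝ → Phase k, γ t₀ = x₀ ∧ IsHamSolOn G γ Set.univ

/-- The floor (for `R = R₀`) resp. ceiling (for `R = R₁`) of the Lagrangian tetragon in
`ℂ^k = ℝ^{2k}` with `T = π/4`: the points `(√R·cos θ·u, √R·sin θ·u)`, `|u| = 1`,
`θ ∈ [0, π/2]`. -/
def sphereFloor (k : ℕ) (R : ℝ) : Set (Phase k) :=
  {x | ∃ (u : Vec k) (θ : ℝ), eucNorm u = 1 ∧ θ ∈ Icc 0 (π / 2) ∧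
        x = ((Real.sqrt R * Real.cos θ) • u, (Real.sqrt R * Real.sin θ) • u)}

/-- The high wall `{(p, 0) : √R₀ ≤ |p| ≤ √R₁}`. -/
def sphereHigh (k : ℕ) (R₀ R₁ : ℝ) : Set (Phase k) :=
  {x | x.2 = 0 ∧ Real.sqrt R₀ ≤ eucNorm x.1 ∧ eucNorm x.1 ≤ Real.sqrt R₁}

/-- The low wall `{(0, q) : √R₀ ≤ |q| ≤ √R₁}`. -/
def sphereLow (k : ℕ) (R₀ R₁ : ℝ) : Set (Phase k) :=
  {x | x.1 = 0 ∧ Real.sqrt R₀ ≤ eucNorm x.2 ∧ eucNorm x.2 ≤ Real.sqrt R₁}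


lemma eucNorm_smul {k : ℕ} (c : ℝ) (x : Vec k) : eucNorm (c • x) = |c| * eucNorm x := by
  unfold eucNorm
  have : ∑ i, (c • x) i ^ 2 = c ^ 2 * ∑ i, x i ^ 2 := by
    rw [Finset.mul_sum]; congr 1; funext i; simp [mul_pow]
  rw [this, Real.sqrt_mul (sq_nonneg c), Real.sqrt_sq_eq_abs]

lemma sumsq_hasFDerivAt {k : ℕ} (x : Vec k) :
    HasFDerivAt (fun q : Vec k => ∑ j, q j ^ 2)
      (∑ j, (2 * x j) • (ContinuousLinearMap.proj j : Vec k →L[ℝ] ℝ)) x := by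
  apply HasFDerivAt.fun_sum
  intro j _
  have h1 : HasFDerivAt (fun q : Vec k => q j)
      (ContinuousLinearMap.proj j : Vec k →L[ℝ] ℝ) x :=
    (ContinuousLinearMap.proj j : Vec k →L[ℝ] ℝ).hasFDerivAt
  have := h1.fun_mul h1
  simp only [pow_two]
  refine this.congr_fderiv ?_
  ext v
  simp [two_mul, add_smul]

lemma eval_sum {k : ℕ} (x : Vec k) (i : Fin k) :
    (∑ j, (2 * x j) • (ContinuousLinearMap.proj j : Vec k →L[ℝ] ℝ)) (Pi.single i 1)
      = 2 * x i := by
  rw [ContinuousLinearMap.sum_apply]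
  rw [Finset.sum_eq_single i]
  · simp
  · intro j _ hj; simp [Pi.single_apply, hj]
  · simp

lemma grad_q {k : ℕ} (a b : Vec k) :
    gradVec (fun q : Vec k => (∑ i, a i ^ 2 - ∑ i, q i ^ 2) / 2) b = fun i => -(b i) := by
  funext i
  have h : HasFDerivAt (fun q : Vec k => (∑ i, a i ^ 2 - ∑ i, q i ^ 2) / 2)
      ((-(2:ℝ)⁻¹) • (∑ j, (2 * b j) • (ContinuousLinearMap.proj j : Vec k →L[ℝ] ℝ))) b := by
    have h2 := ((sumsq_hasFDerivAt b).const_sub (∑ i, a i ^ 2)).const_mul ((2:ℝ)⁻¹)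
    have heq : (fun q : Vec k => (∑ i, a i ^ 2 - ∑ i, q i ^ 2) / 2)
        = fun q : Vec k => (2:ℝ)⁻¹ * (∑ i, a i ^ 2 - ∑ i, q i ^ 2) := by
      funext q; ring
    rw [heq]
    refine h2.congr_fderiv ?_
    ext v
    simp
  unfold gradVec
  rw [h.fderiv, ContinuousLinearMap.smul_apply, eval_sum]
  simp

lemma grad_p {k : ℕ} (a b : Vec k) :
    gradVec (fun p : Vec k => (∑ i, p i ^ 2 - ∑ i, b i ^ 2) / 2) a = fun i => a i := by
  funext i
  have h : HasFDerivAt (fun p : Vec k => (∑ i, p i ^ 2 - ∑ i, b i ^ 2) / 2)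
      (((2:ℝ)⁻¹) • (∑ j, (2 * a j) • (ContinuousLinearMap.proj j : Vec k →L[ℝ] ℝ))) a := by
    have h2 := ((sumsq_hasFDerivAt a).sub_const (∑ i, b i ^ 2)).const_mul ((2:ℝ)⁻¹)
    have heq : (fun p : Vec k => (∑ i, p i ^ 2 - ∑ i, b i ^ 2) / 2)
        = fun p : Vec k => (2:ℝ)⁻¹ * (∑ i, p i ^ 2 - ∑ i, b i ^ 2) := by
      funext p; ring
    rw [heq]
    convert h2 using 1
  unfold gradVec
  rw [h.fderiv, ContinuousLinearMap.smul_apply, eval_sum]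
  simp

lemma mem_sphereFloor_diag {k : ℕ} (R R₀ : ℝ) (hR₀ : 0 < R₀)
    (u : Vec k) (hu : eucNorm u = Real.sqrt R₀) (c : ℝ)
    (hc : c = Real.sqrt R / Real.sqrt R₀ / Real.sqrt 2) :
    ((c • u, c • u) : Phase k) ∈ sphereFloor k R := by
  have hs0 : (0:ℝ) < Real.sqrt R₀ := Real.sqrt_pos.mpr hR₀
  have h2 : Real.sqrt 2 * Real.sqrt 2 = 2 := Real.mul_self_sqrt (by norm_num)
  have h2pos : (0:ℝ) < Real.sqrt 2 := Real.sqrt_pos.mpr (by norm_num)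
  refine ⟨(Real.sqrt R₀)⁻¹ • u, π/4, ?_, ?_, ?_⟩
  · rw [eucNorm_smul, hu, abs_inv, abs_of_pos hs0, inv_mul_cancel₀ (ne_of_gt hs0)]
  · constructor
    · positivity
    · linarith [pi_pos]
  · have hscal : Real.sqrt R * Real.cos (π/4) * (Real.sqrt R₀)⁻¹ = c := by
      rw [hc, Real.cos_pi_div_four]
      field_simp
      linear_combination Real.sqrt R * h2
    have hscal' : Real.sqrt R * Real.sin (π/4) * (Real.sqrt R₀)⁻¹ = c := by
      rw [hc, Real.sin_pi_div_four]
      field_simp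
      linear_combination Real.sqrt R * h2
    rw [smul_smul, smul_smul, hscal, hscal']

/-- for the quadratic Hamiltonian `H = (|p|²-|q|²)/2`, the explicit curve
`γ(t) = (eᵗ·u/√2, eᵗ·u/√2)` (with `|u| = √R₀`) is a global solution of Hamilton's
equations; it starts on the floor and reaches the ceiling at time
`t* = (1/2)·log(R₁/R₀) > 0`, so `H` has a chord from the floor to the ceiling of
time-length `(1/2)·log(R₁/R₀)`. -/
theorem stmt_7 (k : ℕ) (hk : 1 ≤ k) (R₀ R₁ : ℝ) (hR₀ : 0 < R₀) (hR : R₀ < R₁)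
    (H : Phase k → ℝ) (hH : H = fun x => (∑ i, x.1 i ^ 2 - ∑ i, x.2 i ^ 2) / 2)
    (u : Vec k) (hu : eucNorm u = Real.sqrt R₀)
    (γ : ℝ → Phase k)
    (hγ : γ = fun t => ((Real.exp t / Real.sqrt 2) • u, (Real.exp t / Real.sqrt 2) • u))
    (tstar : ℝ) (htstar : tstar = (1 / 2) * Real.log (R₁ / R₀)) :
    IsHamSolOn (fun z => H z.1) γ univ ∧
    0 < tstar ∧
    γ 0 ∈ sphereFloor k R₀ ∧ γ tstar ∈ sphereFloor k R₁ ∧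
    (∃ (t₀ : ℝ) (σ : ℝ → Phase k),
      IsHamSolOn (fun z => H z.1) σ (Icc t₀ (t₀ + tstar)) ∧
      σ t₀ ∈ sphereFloor k R₀ ∧ σ (t₀ + tstar) ∈ sphereFloor k R₁) := by
  subst hH hγ
  have hR₁ : 0 < R₁ := hR₀.trans hR
  have hs0 : (0:ℝ) < Real.sqrt R₀ := Real.sqrt_pos.mpr hR₀
  have hsol : IsHamSolOn (k := k)
      (fun z => (∑ i, z.1.1 i ^ 2 - ∑ i, z.1.2 i ^ 2) / 2)
      (fun t => ((Real.exp t / Real.sqrt 2) • u, (Real.exp t / Real.sqrt 2) • u)) univ := by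
    intro t _
    have he : HasDerivAt (fun s => Real.exp s / Real.sqrt 2) (Real.exp t / Real.sqrt 2) t :=
      (Real.hasDerivAt_exp t).div_const _
    have hd : HasDerivAt (fun s => (Real.exp s / Real.sqrt 2) • u)
        ((Real.exp t / Real.sqrt 2) • u) t := he.smul_const u
    constructor
    · dsimp only
      rw [grad_q]
      have hfun : (-(fun i => -(((Real.exp t / Real.sqrt 2) • u) i)) : Vec k)
          = (Real.exp t / Real.sqrt 2) • u := by funext i; simp
      rw [hfun]
      exact hd
    · dsimp only
      rw [grad_p]
      have hfun : ((fun i => ((Real.exp t / Real.sqrt 2) • u) i) : Vec k)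
          = (Real.exp t / Real.sqrt 2) • u := by funext i; rfl
      rw [hfun]
      exact hd
  have htpos : 0 < tstar := by
    rw [htstar]
    have : 1 < R₁ / R₀ := (one_lt_div hR₀).mpr hR
    have := Real.log_pos this
    linarith
  have hexp : Real.exp tstar = Real.sqrt R₁ / Real.sqrt R₀ := by
    rw [htstar, ← Real.sqrt_div hR₁.le R₀, Real.sqrt_eq_rpow,
      Real.rpow_def_of_pos (div_pos hR₁ hR₀)]
    ring_nf
  have hfloor : ((Real.exp 0 / Real.sqrt 2) • u, (Real.exp 0 / Real.sqrt 2) • u)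
      ∈ sphereFloor k R₀ := by
    apply mem_sphereFloor_diag R₀ R₀ hR₀ u hu
    rw [Real.exp_zero, div_self (ne_of_gt hs0)]
  have hceil : ((Real.exp tstar / Real.sqrt 2) • u, (Real.exp tstar / Real.sqrt 2) • u)
      ∈ sphereFloor k R₁ := by
    apply mem_sphereFloor_diag R₁ R₀ hR₀ u hu
    rw [hexp]
  refine ⟨hsol, htpos, hfloor, hceil, 0, _, fun t _ => hsol t trivial, hfloor, ?_⟩
  rw [zero_add]
  exact hceil
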